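/- Let 0 < ε < π/8 and let 𝓘 = [-π/8 - ε, -π/8 + ε] ∪ [π/8 - ε, π/8 + ε]. Define H : ℝ → ℝ by H(θ) = ∫_𝓘 |sin(2(θ - θ'))| dθ'. Then H(-π/8 - ε) = H(-π/8 + ε) = H(π/8 - ε) = H(π/8 + ε). -/

import Mathlib

open Real MeasureTheory

lemma piece (θ p q : ℝ) (hpq : p ≤ q) :
    ∫ x in Set.Icc p q, Real.sin (2*(θ-x)) =
      (Real.cos (2*θ-2*q) - Real.cos (2*θ-2*p))/2 := by
  rw [MeasureTheory.integral_Icc_eq_integral_Ioc, ← intervalIntegral.integral_of_le hpq]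
  have h : ∀ x ∈ Set.uIcc p q,
      HasDerivAt (fun x => Real.cos (2*θ-2*x)/2) (Real.sin (2*(θ-x))) x := by
    intro x _
    have h1 : HasDerivAt (fun x : ℝ => 2*θ-2*x) (-2) x := by
      simpa using ((hasDerivAt_id x).const_mul 2).const_sub (2*θ)
    have h2 := ((Real.hasDerivAt_cos (2*θ-2*x)).comp x h1).div_const 2
    refine h2.congr_deriv ?_
    rw [show 2*(θ-x) = 2*θ-2*x by ring]
    ring
  rw [intervalIntegral.integral_eq_sub_of_hasDerivAt h]
  · ring
  · exact (Real.continuous_sin.comp (by continuity)).intervalIntegrable p q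

lemma piece_pos (θ p q : ℝ) (hpq : p ≤ q)
    (hs : ∀ x ∈ Set.Icc p q, 0 ≤ Real.sin (2*(θ-x))) :
    ∫ x in Set.Icc p q, |Real.sin (2*(θ-x))| =
      (Real.cos (2*θ-2*q) - Real.cos (2*θ-2*p))/2 := by
  rw [MeasureTheory.setIntegral_congr_fun measurableSet_Icc
    (fun x hx => abs_of_nonneg (hs x hx))]
  exact piece θ p q hpq

lemma piece_neg (θ p q : ℝ) (hpq : p ≤ q)
    (hs : ∀ x ∈ Set.Icc p q, Real.sin (2*(θ-x)) ≤ 0) :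
    ∫ x in Set.Icc p q, |Real.sin (2*(θ-x))| =
      (Real.cos (2*θ-2*p) - Real.cos (2*θ-2*q))/2 := by
  have he : Set.EqOn (fun x => |Real.sin (2*(θ-x))|) (fun x => -Real.sin (2*(θ-x)))
      (Set.Icc p q) := fun x hx => abs_of_nonpos (hs x hx)
  rw [MeasureTheory.setIntegral_congr_fun measurableSet_Icc he, integral_neg,
    piece θ p q hpq]
  ring

/-- sharpness of the support condition: for
`𝓘 = [-π/8-ε, -π/8+ε] ∪ [π/8-ε, π/8+ε]` with `0 < ε < π/8`, the function
`H(θ) = ∫_𝓘 |sin(2(θ-θ'))| dθ'` takes the same value at all four endpoints. -/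
theorem two_sector_rotating_solution (ε : ℝ) (hε0 : 0 < ε) (hε : ε < π / 8)
    (H : ℝ → ℝ)
    (hH : ∀ θ : ℝ, H θ =
      ∫ θ' in (Set.Icc (-(π / 8) - ε) (-(π / 8) + ε) ∪
        Set.Icc (π / 8 - ε) (π / 8 + ε)), |Real.sin (2 * (θ - θ'))|) :
    H (-(π / 8) - ε) = H (-(π / 8) + ε) ∧
    H (-(π / 8) + ε) = H (π / 8 - ε) ∧
    H (π / 8 - ε) = H (π / 8 + ε) := by
  have hπ : 0 < π := pi_pos
  have hdisj : Disjoint (Set.Icc (-(π / 8) - ε) (-(π / 8) + ε))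
      (Set.Icc (π / 8 - ε) (π / 8 + ε)) := by
    rw [Set.disjoint_left]
    rintro x ⟨h1, h2⟩ ⟨h3, h4⟩
    linarith
  have hsplit : ∀ θ : ℝ, H θ =
      (∫ x in Set.Icc (-(π / 8) - ε) (-(π / 8) + ε), |Real.sin (2*(θ-x))|) +
      ∫ x in Set.Icc (π / 8 - ε) (π / 8 + ε), |Real.sin (2*(θ-x))| := by
    intro θ
    rw [hH θ]
    have hc : Continuous fun x : ℝ => |Real.sin (2*(θ-x))| :=
      (Real.continuous_sin.comp
        (continuous_const.mul (continuous_const.sub continuous_id))).abs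
    exact MeasureTheory.setIntegral_union hdisj measurableSet_Icc
      hc.integrableOn_Icc hc.integrableOn_Icc
  have e1 : Real.cos (π/2 + 4*ε) = -Real.sin (4*ε) := by
    rw [Real.cos_add]; simp
  have e2 : Real.cos (π/2 - 4*ε) = Real.sin (4*ε) := Real.cos_pi_div_two_sub _
  have hA : H (-(π / 8) - ε) = (1 - Real.cos (4*ε) + Real.sin (4*ε))/2 := by
    rw [hsplit,
      piece_neg _ _ _ (by linarith) (by
        rintro x ⟨h1, h2⟩
        exact Real.sin_nonpos_of_nonpos_of_neg_pi_le (by linarith) (by linarith)),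
      piece_neg _ _ _ (by linarith) (by
        rintro x ⟨h1, h2⟩
        exact Real.sin_nonpos_of_nonpos_of_neg_pi_le (by linarith) (by linarith)),
      show 2*(-(π / 8) - ε)-2*(-(π / 8) - ε) = 0 by ring,
      show 2*(-(π / 8) - ε)-2*(-(π / 8) + ε) = -(4*ε) by ring,
      show 2*(-(π / 8) - ε)-2*(π / 8 - ε) = -(π/2) by ring,
      show 2*(-(π / 8) - ε)-2*(π / 8 + ε) = -(π/2 + 4*ε) by ring,
      Real.cos_neg, Real.cos_neg, Real.cos_neg, Real.cos_zero, Real.cos_pi_div_two, e1]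
    ring
  have hB : H (-(π / 8) + ε) = (1 - Real.cos (4*ε) + Real.sin (4*ε))/2 := by
    rw [hsplit,
      piece_pos _ _ _ (by linarith) (by
        rintro x ⟨h1, h2⟩
        exact Real.sin_nonneg_of_nonneg_of_le_pi (by linarith) (by linarith)),
      piece_neg _ _ _ (by linarith) (by
        rintro x ⟨h1, h2⟩
        exact Real.sin_nonpos_of_nonpos_of_neg_pi_le (by linarith) (by linarith)),
      show 2*(-(π / 8) + ε)-2*(-(π / 8) + ε) = 0 by ring,
      show 2*(-(π / 8) + ε)-2*(-(π / 8) - ε) = 4*ε by ring,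
      show 2*(-(π / 8) + ε)-2*(π / 8 - ε) = -(π/2 - 4*ε) by ring,
      show 2*(-(π / 8) + ε)-2*(π / 8 + ε) = -(π/2) by ring,
      Real.cos_neg, Real.cos_neg, Real.cos_zero, Real.cos_pi_div_two, e2]
    ring
  have hC : H (π / 8 - ε) = (1 - Real.cos (4*ε) + Real.sin (4*ε))/2 := by
    rw [hsplit,
      piece_pos _ _ _ (by linarith) (by
        rintro x ⟨h1, h2⟩
        exact Real.sin_nonneg_of_nonneg_of_le_pi (by linarith) (by linarith)),
      piece_neg _ _ _ (by linarith) (by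
        rintro x ⟨h1, h2⟩
        exact Real.sin_nonpos_of_nonpos_of_neg_pi_le (by linarith) (by linarith)),
      show 2*(π / 8 - ε)-2*(-(π / 8) + ε) = π/2 - 4*ε by ring,
      show 2*(π / 8 - ε)-2*(-(π / 8) - ε) = π/2 by ring,
      show 2*(π / 8 - ε)-2*(π / 8 - ε) = 0 by ring,
      show 2*(π / 8 - ε)-2*(π / 8 + ε) = -(4*ε) by ring,
      Real.cos_neg, Real.cos_zero, Real.cos_pi_div_two, e2]
    ring
  have hD : H (π / 8 + ε) = (1 - Real.cos (4*ε) + Real.sin (4*ε))/2 := by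
    rw [hsplit,
      piece_pos _ _ _ (by linarith) (by
        rintro x ⟨h1, h2⟩
        exact Real.sin_nonneg_of_nonneg_of_le_pi (by linarith) (by linarith)),
      piece_pos _ _ _ (by linarith) (by
        rintro x ⟨h1, h2⟩
        exact Real.sin_nonneg_of_nonneg_of_le_pi (by linarith) (by linarith)),
      show 2*(π / 8 + ε)-2*(-(π / 8) + ε) = π/2 by ring,
      show 2*(π / 8 + ε)-2*(-(π / 8) - ε) = π/2 + 4*ε by ring,
      show 2*(π / 8 + ε)-2*(π / 8 + ε) = 0 by ring,
      show 2*(π / 8 + ε)-2*(π / 8 - ε) = 4*ε by ring,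
      Real.cos_zero, Real.cos_pi_div_two, e1]
    ring
  exact ⟨hA.trans hB.symm, hB.trans hC.symm, hC.trans hD.symm⟩
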